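/- Each of the 6 edges of the closed polygonal chain with vertices (1−√2, 1−√2, 0), (√2, √2, 0), (1/2, 1/2, 2√3 − √(3/2)), (√2, 1−√2, 0), (1−√2, √2, 0), (1/2, 1/2, 2√3 − √(3/2)), returning to (1−√2, 1−√2, 0), has Euclidean length exactly 4 − √2. -/

import Mathlib

noncomputable def pt3 (a b c : ℝ) : EuclideanSpace ℝ (Fin 3) := WithLp.toLp 2 ![a, b, c]

/-- The vertices of the closed covering circuit `F'_{2,2,2}` (last vertex = first). -/
noncomputable def F'222 : Fin 7 → EuclideanSpace ℝ (Fin 3) :=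
  ![pt3 (1 - Real.sqrt 2) (1 - Real.sqrt 2) 0,
    pt3 (Real.sqrt 2) (Real.sqrt 2) 0,
    pt3 (1 / 2) (1 / 2) (2 * Real.sqrt 3 - Real.sqrt (3 / 2)),
    pt3 (Real.sqrt 2) (1 - Real.sqrt 2) 0,
    pt3 (1 - Real.sqrt 2) (Real.sqrt 2) 0,
    pt3 (1 / 2) (1 / 2) (2 * Real.sqrt 3 - Real.sqrt (3 / 2)),
    pt3 (1 - Real.sqrt 2) (1 - Real.sqrt 2) 0]

lemma aux_dist (a b c d e f : ℝ)
    (h : (a - d)^2 + ((b - e)^2 + (c - f)^2) = (4 - Real.sqrt 2)^2) :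
    dist (pt3 a b c) (pt3 d e f) = 4 - Real.sqrt 2 := by
  have h2 : Real.sqrt 2 ≤ 4 := by
    nlinarith [Real.sq_sqrt (by norm_num : (2:ℝ) ≥ 0), Real.sqrt_nonneg 2]
  rw [EuclideanSpace.dist_eq]
  simp only [pt3, Fin.sum_univ_three, Matrix.cons_val_zero, Matrix.cons_val_one,
    Matrix.head_cons, Matrix.cons_val_two, Matrix.tail_cons, Real.dist_eq, sq_abs]
  rw [show (a - d)^2 + (b - e)^2 + (c - f)^2 = (4 - Real.sqrt 2)^2 by linarith,
    Real.sqrt_sq (by linarith)]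

/-- Each of the 6 edges of the closed chain `F'_{2,2,2}` has Euclidean length
exactly `4 − √2`. -/
theorem stmt16 :
    ∀ i : Fin 6, dist (F'222 i.castSucc) (F'222 i.succ) = 4 - Real.sqrt 2 := by
  have s2 := Real.sq_sqrt (by norm_num : (2:ℝ) ≥ 0)
  have s3 := Real.sq_sqrt (by norm_num : (3:ℝ) ≥ 0)
  have s32 := Real.sq_sqrt (by norm_num : (3/2:ℝ) ≥ 0)
  have hd : Real.sqrt 3 / Real.sqrt 2 = Real.sqrt (3/2) :=
    (Real.sqrt_div (by norm_num) 2).symm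
  have h23 : Real.sqrt (3/2) * Real.sqrt 2 = Real.sqrt 3 := by
    rw [← Real.sqrt_mul (by norm_num)]; norm_num
  have hp : Real.sqrt 3 * Real.sqrt (3/2) = 3/2 * Real.sqrt 2 := by
    calc Real.sqrt 3 * Real.sqrt (3/2) = (Real.sqrt (3/2) * Real.sqrt 2) * Real.sqrt (3/2) := by
          rw [h23]
      _ = Real.sqrt (3/2)^2 * Real.sqrt 2 := by ring
      _ = 3/2 * Real.sqrt 2 := by rw [s32]
  intro i
  fin_cases i <;>
  · simp only [F'222, Fin.castSucc, Fin.succ, Matrix.cons_val_zero, Matrix.cons_val_one,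
      Matrix.head_cons, Fin.isValue]
    norm_num
    apply aux_dist
    try simp only [hd]
    nlinarith [s2, s3, s32, hp]
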